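/- Let K ⊆ ℂⁿ be compact, w a continuous weight, (v,μ) a vector measure pair on K, ω ∈ C(K,ℝˢ), and w(x,t) := (w₁(x)e^{−tω₁(x)},…,w_s(x)e^{−tω_s(x)}). Then for all h,k ∈ {1,…,N} the entry t ↦ (G_r^{v,μ,w(·,t)})_{h,k} is differentiable on ℝ with d/dt (G_r^{v,μ,w(·,t)})_{h,k} = −r · ∫_K [ g_x(q_h ⊙ w^r(·,t), q_k ⊙ w^r(·,t) ⊙ ω) + g_x(q_h ⊙ w^r(·,t) ⊙ ω, q_k ⊙ w^r(·,t)) ] dμ(x). -/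

import Mathlib

open MeasureTheory Filter Topology
open scoped BigOperators ComplexConjugate ENNReal NNReal

noncomputable section

/-- Points of ℂⁿ. -/
abbrev Pt (n : ℕ) := Fin n → ℂ

/-- The Hermitian space U ≅ ℂˢ with its standard Hermitian inner product. -/
abbrev Vec (s : ℕ) := EuclideanSpace ℂ (Fin s)

/-- The monomial x^β. -/
def mono {n : ℕ} (β : Fin n → ℕ) (x : Pt n) : ℂ := ∏ i, x i ^ β i

/-- m_r := C(n+r, n), the dimension of the space of polynomials of degree ≤ r in n variables. -/
def mr (n r : ℕ) : ℕ := (n + r).choose n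

/-- ℓ_r := Σ_{k=1}^{r} k (m_k − m_{k−1}). -/
def lr (n r : ℕ) : ℕ := ∑ k ∈ Finset.Icc 1 r, k * (mr n k - mr n (k - 1))

/-- `B` enumerates the multi-indices β ∈ ℕⁿ with |β| ≤ r. -/
def IsEnum {n : ℕ} (r m : ℕ) (B : Fin m → Fin n → ℕ) : Prop :=
  Function.Injective B ∧ (∀ l, ∑ j, B l j ≤ r) ∧
    ∀ γ : Fin n → ℕ, (∑ j, γ j) ≤ r → ∃ l, B l = γ

/-- The basis polynomial q_{(l,i)}(x) := x^{β(l)} e_i of 𝒫_r(U). -/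
def qb {n s m : ℕ} (B : Fin m → Fin n → ℕ) (j : Fin m × Fin s) (x : Pt n) : Vec s :=
  EuclideanSpace.single j.2 (mono (B j.1) x)

/-- f ⊙ w^r : componentwise multiplication by the r-th power of the weight w. -/
def wodot {n s : ℕ} (w : Pt n → Fin s → ℝ) (r : ℕ) (f : Pt n → Vec s) : Pt n → Vec s :=
  fun x => WithLp.toLp 2 (fun i => ((w x i : ℂ) ^ r) * f x i)

/-- f ⊙ ω : componentwise multiplication by a real vector function ω. -/
def modot {n s : ℕ} (ω : Pt n → Fin s → ℝ) (f : Pt n → Vec s) : Pt n → Vec s :=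
  fun x => WithLp.toLp 2 (fun i => ((ω x i : ℂ)) * f x i)

/-- The ℂˢ-valued polynomial of degree ≤ r with coefficients c (in the basis qb). -/
def poly {n s m : ℕ} (B : Fin m → Fin n → ℕ) (c : Fin m × Fin s → ℂ) (x : Pt n) : Vec s :=
  WithLp.toLp 2 (fun i => ∑ l, c (l, i) * mono (B l) x)

/-- A scalar polynomial of degree ≤ r with coefficients c. -/
def spoly {n m : ℕ} (B : Fin m → Fin n → ℕ) (c : Fin m → ℂ) (x : Pt n) : ℂ :=
  ∑ l, c l * mono (B l) x

/-- The rank-one semimetric g_x(a,b) := conj(⟨v(x),a⟩)·⟨v(x),b⟩. -/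
def gval {n s : ℕ} (v : Pt n → Vec s) (x : Pt n) (a b : Vec s) : ℂ :=
  conj (inner ℂ (v x) a : ℂ) * (inner ℂ (v x) b : ℂ)

/-- The Gram matrix G_r^{v,μ,w}. -/
def Gmat {n : ℕ} (s : ℕ) (K : Set (Pt n)) (μ : Measure (Pt n)) (v : Pt n → Vec s)
    (w : Pt n → Fin s → ℝ) (r m : ℕ) (B : Fin m → Fin n → ℕ) :
    Matrix (Fin m × Fin s) (Fin m × Fin s) ℂ :=
  Matrix.of fun i j => ∫ x in K, gval v x (wodot w r (qb B i) x) (wodot w r (qb B j) x) ∂μ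

/-- The varied weight w(x,t) := (w₁(x)e^{−tω₁(x)},…,w_s(x)e^{−tω_s(x)}). -/
def wmod {n s : ℕ} (w ω : Pt n → Fin s → ℝ) (t : ℝ) : Pt n → Fin s → ℝ :=
  fun y j => w y j * Real.exp (-t * ω y j)



open ComplexConjugate in
lemma gval_wodot {n s m : ℕ} (v : Pt n → Vec s) (W : Pt n → Fin s → ℝ) (r : ℕ)
    (B : Fin m → Fin n → ℕ) (h k : Fin m × Fin s) (y : Pt n) :
    gval v y (wodot W r (qb B h) y) (wodot W r (qb B k) y)
      = (v y h.2 * conj (mono (B h.1) y) * (W y h.2 : ℂ) ^ r)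
        * (conj (v y k.2) * mono (B k.1) y * (W y k.2 : ℂ) ^ r) := by
  simp [gval, wodot, qb, PiLp.inner_apply, EuclideanSpace.single_apply, mul_ite,
    Finset.sum_ite_eq, RCLike.inner_apply, map_mul, map_pow, Complex.conj_ofReal]
  ring

open ComplexConjugate in
lemma gval_wodot_modot {n s m : ℕ} (v : Pt n → Vec s) (W : Pt n → Fin s → ℝ)
    (ω : Pt n → Fin s → ℝ) (r : ℕ)
    (B : Fin m → Fin n → ℕ) (h k : Fin m × Fin s) (y : Pt n) :
    gval v y (wodot W r (qb B h) y) (wodot W r (modot ω (qb B k)) y)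
      = (v y h.2 * conj (mono (B h.1) y) * (W y h.2 : ℂ) ^ r)
        * (conj (v y k.2) * mono (B k.1) y * (W y k.2 : ℂ) ^ r) * (ω y k.2 : ℂ) := by
  simp [gval, wodot, qb, modot, PiLp.inner_apply, EuclideanSpace.single_apply, mul_ite,
    Finset.sum_ite_eq, RCLike.inner_apply, map_mul, map_pow, Complex.conj_ofReal]
  ring

open ComplexConjugate in
lemma gval_modot_wodot {n s m : ℕ} (v : Pt n → Vec s) (W : Pt n → Fin s → ℝ)
    (ω : Pt n → Fin s → ℝ) (r : ℕ)
    (B : Fin m → Fin n → ℕ) (h k : Fin m × Fin s) (y : Pt n) :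
    gval v y (wodot W r (modot ω (qb B h)) y) (wodot W r (qb B k) y)
      = (v y h.2 * conj (mono (B h.1) y) * (W y h.2 : ℂ) ^ r)
        * (conj (v y k.2) * mono (B k.1) y * (W y k.2 : ℂ) ^ r) * (ω y h.2 : ℂ) := by
  simp [gval, wodot, qb, modot, PiLp.inner_apply, EuclideanSpace.single_apply, mul_ite,
    Finset.sum_ite_eq, RCLike.inner_apply, map_mul, map_pow, Complex.conj_ofReal]
  ring

lemma coord_le_norm {s : ℕ} (u : Vec s) (j : Fin s) : ‖u j‖ ≤ ‖u‖ := by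
  rw [EuclideanSpace.norm_eq]
  calc ‖u j‖ = Real.sqrt (‖u j‖ ^ 2) := (Real.sqrt_sq (norm_nonneg _)).symm
    _ ≤ _ := Real.sqrt_le_sqrt (Finset.single_le_sum
        (f := fun i => ‖u i‖ ^ 2) (fun i _ => sq_nonneg _) (Finset.mem_univ j))

lemma continuous_mono {n : ℕ} (β : Fin n → ℕ) : Continuous (mono β) :=
  continuous_finset_prod _ fun i _ => (continuous_apply i).pow _

/-- entrywise derivative of the weighted Gram matrix. -/
theorem stmt17 {n s : ℕ} (hn : 0 < n) (hs : 0 < s)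
    (K : Set (Pt n)) (hK : IsCompact K)
    (μ : Measure (Pt n)) [IsFiniteMeasure μ]
    (v : Pt n → Vec s) (hv : ∀ i, Measurable fun y => v y i)
    (hv1 : ∀ᵐ y ∂(μ.restrict K), ‖v y‖ = 1)
    (w : Pt n → Fin s → ℝ) (hw : ContinuousOn (fun y => w y) K)
    (hwpos : ∀ y ∈ K, ∀ j, 0 < w y j)
    (ω : Pt n → Fin s → ℝ) (hω : ContinuousOn (fun y => ω y) K)
    (r : ℕ) (B : Fin (mr n r) → Fin n → ℕ) (hB : IsEnum r (mr n r) B)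
    (h k : Fin (mr n r) × Fin s) (t : ℝ) :
    HasDerivAt (fun t' : ℝ => Gmat s K μ v (wmod w ω t') r (mr n r) B h k)
      (-(r : ℂ) * ∫ y in K,
        (gval v y (wodot (wmod w ω t) r (qb B h) y)
            (wodot (wmod w ω t) r (modot ω (qb B k)) y) +
          gval v y (wodot (wmod w ω t) r (modot ω (qb B h)) y)
            (wodot (wmod w ω t) r (qb B k) y)) ∂μ)
      t := by
  classical
  have hKm : MeasurableSet K := hK.isClosed.measurableSet
  set c : Pt n → ℝ := fun y => (r : ℝ) * (ω y h.2 + ω y k.2) with hc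
  set φ : Pt n → ℂ := fun y =>
    (v y h.2 * (starRingEnd ℂ) (mono (B h.1) y) * (w y h.2 : ℂ) ^ r)
      * ((starRingEnd ℂ) (v y k.2) * mono (B k.1) y * (w y k.2 : ℂ) ^ r) with hφ
  set F : ℝ → Pt n → ℂ := fun t' y => φ y * ((Real.exp (-(t' * c y)) : ℝ) : ℂ) with hF
  set F' : ℝ → Pt n → ℂ := fun t' y =>
    φ y * (((-(c y)) * Real.exp (-(t' * c y)) : ℝ) : ℂ) with hF'
  -- exponent combination
  have e1 : ∀ (t' : ℝ) (y : Pt n),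
      (Real.exp (-t' * ω y h.2)) ^ r * (Real.exp (-t' * ω y k.2)) ^ r
        = Real.exp (-(t' * c y)) := by
    intro t' y
    rw [← Real.exp_nat_mul, ← Real.exp_nat_mul, ← Real.exp_add]
    congr 1
    simp only [hc]
    ring
  -- pointwise identity for integrand
  have key : ∀ (t' : ℝ) (y : Pt n),
      gval v y (wodot (wmod w ω t') r (qb B h) y) (wodot (wmod w ω t') r (qb B k) y)
        = F t' y := by
    intro t' y
    rw [gval_wodot]
    simp only [hF, hφ, wmod]
    rw [← e1 t' y]
    push_cast
    ring
  -- pointwise identity for the derivative integrand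
  have key2 : ∀ y : Pt n,
      (-(r : ℂ)) * ((gval v y (wodot (wmod w ω t) r (qb B h) y)
            (wodot (wmod w ω t) r (modot ω (qb B k)) y))
          + gval v y (wodot (wmod w ω t) r (modot ω (qb B h)) y)
            (wodot (wmod w ω t) r (qb B k) y))
        = F' t y := by
    intro y
    rw [gval_wodot_modot, gval_modot_wodot]
    simp only [hF', hφ, hc, wmod]
    rw [← e1 t y]
    push_cast
    ring
  -- measurability
  have hwj : ∀ j : Fin s, AEMeasurable (fun y => w y j) (μ.restrict K) := fun j =>
    ((continuous_apply j).comp_continuousOn hw).aemeasurable hKm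
  have hωj : ∀ j : Fin s, AEMeasurable (fun y => ω y j) (μ.restrict K) := fun j =>
    ((continuous_apply j).comp_continuousOn hω).aemeasurable hKm
  have hφm : AEMeasurable φ (μ.restrict K) := by
    apply AEMeasurable.mul
    · exact (((hv h.2).aemeasurable.mul
        ((RCLike.continuous_conj.measurable.comp ((continuous_mono (B h.1)).measurable)).aemeasurable)).mul
        ((Complex.measurable_ofReal.comp_aemeasurable (hwj h.2)).pow_const r))
    · exact (((RCLike.continuous_conj.measurable.comp (hv k.2)).aemeasurable.mul
        ((continuous_mono (B k.1)).measurable.aemeasurable)).mul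
        ((Complex.measurable_ofReal.comp_aemeasurable (hwj k.2)).pow_const r))
  have hcm : AEMeasurable c (μ.restrict K) := ((hωj h.2).add (hωj k.2)).const_mul _
  have hFmeas : ∀ t' : ℝ, AEStronglyMeasurable (F t') (μ.restrict K) := by
    intro t'
    exact (hφm.mul (Complex.measurable_ofReal.comp_aemeasurable
      (Real.measurable_exp.comp_aemeasurable ((hcm.const_mul t').neg)))).aestronglyMeasurable
  have hF'meas : AEStronglyMeasurable (F' t) (μ.restrict K) := by
    exact (hφm.mul (Complex.measurable_ofReal.comp_aemeasurable
      (hcm.neg.mul (Real.measurable_exp.comp_aemeasurable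
        ((hcm.const_mul t).neg))))).aestronglyMeasurable
  -- bounds
  obtain ⟨Cw, hCw⟩ := hK.exists_bound_of_continuousOn hw
  obtain ⟨Cω, hCω⟩ := hK.exists_bound_of_continuousOn hω
  obtain ⟨Ch, hCh⟩ := hK.exists_bound_of_continuousOn (continuous_mono (B h.1)).continuousOn
  obtain ⟨Ck, hCk⟩ := hK.exists_bound_of_continuousOn (continuous_mono (B k.1)).continuousOn
  set Mφ : ℝ := 1 * max Ch 0 * (max Cw 0) ^ r * (1 * max Ck 0 * (max Cw 0) ^ r) with hMφ
  set Mc : ℝ := (r : ℝ) * (max Cω 0 + max Cω 0) with hMc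
  have hMφ0 : 0 ≤ Mφ := by positivity
  have hMc0 : 0 ≤ Mc := by positivity
  have hφbd : ∀ᵐ y ∂(μ.restrict K), ‖φ y‖ ≤ Mφ := by
    filter_upwards [hv1, ae_restrict_mem hKm] with y hy1 hyK
    have hvle : ∀ j : Fin s, ‖v y j‖ ≤ 1 := fun j => (coord_le_norm (v y) j).trans_eq hy1
    have hwle : ∀ j : Fin s, ‖w y j‖ ≤ max Cw 0 :=
      fun j => (norm_le_pi_norm (w y) j).trans ((hCw y hyK).trans (le_max_left _ _))
    simp only [hφ, hMφ, norm_mul, norm_pow, RCLike.norm_conj, Complex.norm_real]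
    gcongr
    · exact hvle h.2
    · exact (hCh y hyK).trans (le_max_left _ _)
    · exact hwle h.2
    · exact hvle k.2
    · exact (hCk y hyK).trans (le_max_left _ _)
    · exact hwle k.2
  have hcbd : ∀ᵐ y ∂(μ.restrict K), |c y| ≤ Mc := by
    filter_upwards [ae_restrict_mem hKm] with y hyK
    have hωle : ∀ j : Fin s, |ω y j| ≤ max Cω 0 :=
      fun j => (norm_le_pi_norm (ω y) j).trans ((hCω y hyK).trans (le_max_left _ _))
    calc |c y| = (r : ℝ) * |ω y h.2 + ω y k.2| := by
          rw [hc]; rw [abs_mul, Nat.abs_cast]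
      _ ≤ (r : ℝ) * (|ω y h.2| + |ω y k.2|) := by
          gcongr; exact abs_add_le _ _
      _ ≤ Mc := by rw [hMc]; gcongr <;> [exact hωle h.2; exact hωle k.2]
  have hexpbd : ∀ᵐ y ∂(μ.restrict K), ∀ t' : ℝ, |t'| ≤ |t| + 1 →
      Real.exp (-(t' * c y)) ≤ Real.exp ((|t| + 1) * Mc) := by
    filter_upwards [hcbd] with y hcy
    intro t' ht'
    apply Real.exp_le_exp.2
    calc -(t' * c y) ≤ |t' * c y| := neg_le_abs _
      _ = |t'| * |c y| := abs_mul _ _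
      _ ≤ (|t| + 1) * Mc := by
          apply mul_le_mul ht' hcy (abs_nonneg _) (by positivity)
  -- integrability of F t
  have hFint : Integrable (F t) (μ.restrict K) := by
    apply Integrable.mono' (g := fun _ => Mφ * Real.exp ((|t| + 1) * Mc))
      (integrable_const _) (hFmeas t)
    filter_upwards [hφbd, hexpbd] with y h1 h2
    rw [hF]
    simp only [norm_mul, Complex.norm_real, Real.norm_eq_abs,
      abs_of_pos (Real.exp_pos _)]
    exact mul_le_mul h1 (h2 t (by linarith [abs_nonneg t])) (Real.exp_pos _).le hMφ0
  -- bound for F'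
  have hbound : ∀ᵐ y ∂(μ.restrict K), ∀ t' ∈ Metric.ball t 1,
      ‖F' t' y‖ ≤ Mφ * (Mc * Real.exp ((|t| + 1) * Mc)) := by
    filter_upwards [hφbd, hcbd, hexpbd] with y h1 h2 h3
    intro t' ht'
    have ht'le : |t'| ≤ |t| + 1 := by
      have := mem_ball_iff_norm.1 ht'
      rw [Real.norm_eq_abs] at this
      calc |t'| = |t + (t' - t)| := by ring_nf
        _ ≤ |t| + |t' - t| := abs_add_le _ _
        _ ≤ |t| + 1 := by linarith
    rw [hF']
    simp only [norm_mul, Complex.norm_real, Real.norm_eq_abs, abs_mul, abs_neg,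
      abs_of_pos (Real.exp_pos _)]
    exact mul_le_mul h1 (mul_le_mul h2 (h3 t' ht'le) (Real.exp_pos _).le hMc0)
      (by positivity) hMφ0
  -- pointwise differentiability
  have hdiff : ∀ᵐ y ∂(μ.restrict K), ∀ t' ∈ Metric.ball t 1,
      HasDerivAt (fun u => F u y) (F' t' y) t' := by
    refine Filter.Eventually.of_forall fun y t' _ => ?_
    have h0 : HasDerivAt (fun u : ℝ => -(u * c y)) (-(c y)) t' := by
      have := ((hasDerivAt_id' t').mul_const (c y)).neg
      rw [one_mul] at this
      exact this
    have h1 := (h0.exp).ofReal_comp (z := t')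
    have h2 := h1.const_mul (φ y)
    simp only [hF, hF']
    refine h2.congr_deriv ?_
    push_cast
    ring
  -- apply dominated differentiation
  have main := (hasDerivAt_integral_of_dominated_loc_of_deriv_le
    (μ := μ.restrict K) (F := F) (F' := F') (x₀ := t)
    (bound := fun _ => Mφ * (Mc * Real.exp ((|t| + 1) * Mc)))
    (Metric.ball_mem_nhds t one_pos) (Filter.Eventually.of_forall hFmeas) hFint hF'meas hbound
    (integrable_const _) hdiff).2
  have hGfun : (fun t' : ℝ => Gmat s K μ v (wmod w ω t') r (mr n r) B h k)
      = fun t' : ℝ => ∫ y in K, F t' y ∂μ := by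
    funext t'
    simp only [Gmat, Matrix.of_apply]
    exact integral_congr_ae (Filter.Eventually.of_forall fun y => key t' y)
  have hval : (-(r : ℂ) * ∫ y in K,
      (gval v y (wodot (wmod w ω t) r (qb B h) y)
          (wodot (wmod w ω t) r (modot ω (qb B k)) y) +
        gval v y (wodot (wmod w ω t) r (modot ω (qb B h)) y)
          (wodot (wmod w ω t) r (qb B k) y)) ∂μ)
      = ∫ y in K, F' t y ∂μ := by
    rw [← integral_const_mul]
    exact integral_congr_ae (Filter.Eventually.of_forall fun y => key2 y)
  rw [hGfun, hval]
  exact main
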